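/- In a simple majority voting system with an odd number N of voters, the total Shapley-Shubik rate of success of any voter equals 3/4 + 1/(4N), and in particular converges to 3/4 as N → ∞. -/
import Mathlib

open scoped Classical
open Finset

/-- The total Shapley-Shubik rate of success of voter `v` in the simple majority
voting system with `N = 2n+1` voters: the probability that `v` votes yes and the
yes-coalition wins (size ≥ n+1) plus the probability that `v` votes no and the
yes-coalition loses (size ≤ n). -/
noncomputable def ssSuccessOdd (n : ℕ) (v : Fin (2 * n + 1)) : ℝ :=
  (∑ A ∈ Finset.univ.filter
      (fun A : Finset (Fin (2 * n + 1)) => v ∈ A ∧ n + 1 ≤ A.card),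
    1 / ((((2 * n + 1 : ℕ) : ℝ) + 1) * ((2 * n + 1).choose A.card : ℝ))) +
  (∑ A ∈ Finset.univ.filter
      (fun A : Finset (Fin (2 * n + 1)) => v ∉ A ∧ A.card ≤ n),
    1 / ((((2 * n + 1 : ℕ) : ℝ) + 1) * ((2 * n + 1).choose A.card : ℝ)))

open scoped Classical
open Finset

lemma groupLemma {α : Type*} [Fintype α] [DecidableEq α] (s : Finset α)
    (p : ℕ → Prop) [DecidablePred p] (g : ℕ → ℝ) :
    ∑ B ∈ univ.filter (fun B : Finset α => B ⊆ s ∧ p B.card), g B.card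
      = ∑ j ∈ Finset.range (s.card + 1),
          if p j then (s.card.choose j : ℝ) * g j else 0 := by
  have h : univ.filter (fun B : Finset α => B ⊆ s ∧ p B.card)
      = s.powerset.filter (fun B => p B.card) := by
    ext B; simp [Finset.mem_powerset]
  rw [h, Finset.sum_filter, Finset.sum_powerset]
  refine Finset.sum_congr rfl fun j hj => ?_
  have : ∀ t ∈ Finset.powersetCard j s,
      (if p t.card then g t.card else 0) = (if p j then g j else 0) := by
    intro t ht
    rw [(Finset.mem_powersetCard.mp ht).2]
  rw [Finset.sum_congr rfl this, Finset.sum_const, Finset.card_powersetCard,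
    nsmul_eq_mul]
  split <;> simp

open scoped Classical
open Finset

-- Gauss-type: ∑_{j ∈ range (2n+1), n ≤ j} (j+1) = (n+1)(3n+2)/2 over ℝ
lemma gaussLemma (n : ℕ) :
    ∑ j ∈ Finset.range (2*n+1), (if n ≤ j then ((j:ℝ)+1) else 0)
      = ((n:ℝ)+1)*(3*n+2)/2 := by
  rw [← Finset.sum_filter]
  have h : (Finset.range (2*n+1)).filter (fun j => n ≤ j) = Finset.Ico n (2*n+1) := by
    ext j; simp [Finset.mem_Ico, and_comm]
  rw [h, Finset.sum_Ico_eq_sum_range]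
  have h2 : 2*n+1-n = n+1 := by omega
  rw [h2]
  have gauss : (∑ i ∈ Finset.range (n+1), (i:ℝ)) = n*(n+1)/2 := by
    have := Finset.sum_range_id_mul_two (n+1)
    have : ((∑ i ∈ Finset.range (n+1), i : ℕ) : ℝ) * 2 = ((n+1) * n : ℕ) := by
      exact_mod_cast congrArg (Nat.cast : ℕ → ℝ) this
    push_cast at this
    linarith
  push_cast
  rw [show (fun j : ℕ => ((n:ℝ) + j + 1)) = (fun j : ℕ => (j:ℝ) + ((n:ℝ)+1)) from by
    funext j; ring]
  rw [Finset.sum_add_distrib, gauss, Finset.sum_const, Finset.card_range, nsmul_eq_mul]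
  push_cast; ring
set_option maxHeartbeats 1600000 in
lemma mainFormula (n : ℕ) (v : Fin (2*n+1)) :
    ssSuccessOdd n v = 3 / 4 + 1 / (4 * ((2 * n + 1 : ℕ) : ℝ)) := by
  classical
  set f : ℕ → ℝ := fun k => 1 / (((2*n+1 : ℕ):ℝ) + 1) / (((2*n+1).choose k : ℝ)) with hf
  have cardA : ∀ A : Finset (Fin (2*n+1)), A.card ≤ 2*n+1 := fun A => by
    simpa using Finset.card_le_card (Finset.subset_univ A)
  -- step 1: the two sums are equal via complement
  have step1 :
      (∑ A ∈ Finset.univ.filter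
          (fun A : Finset (Fin (2*n+1)) => v ∉ A ∧ A.card ≤ n), f A.card)
      = (∑ A ∈ Finset.univ.filter
          (fun A : Finset (Fin (2*n+1)) => v ∈ A ∧ n + 1 ≤ A.card), f A.card) := by
    refine Finset.sum_nbij' (fun A => Aᶜ) (fun A => Aᶜ) ?_ ?_ ?_ ?_ ?_
    · intro A hA
      simp only [Finset.mem_filter, Finset.mem_univ, true_and] at hA ⊢
      rw [Finset.mem_compl, Finset.card_compl]
      simp only [Fintype.card_fin]
      exact ⟨hA.1, by omega⟩
    · intro A hA
      simp only [Finset.mem_filter, Finset.mem_univ, true_and] at hA ⊢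
      rw [Finset.mem_compl, Finset.card_compl]
      simp only [Fintype.card_fin]
      have h2 := hA.2
      have h3 := cardA A
      exact ⟨by simp [hA.1], by omega⟩
    · intro A _; simp
    · intro A _; simp
    · intro A hA
      simp only [Finset.mem_filter, Finset.mem_univ, true_and] at hA
      rw [hf]
      simp only
      rw [Finset.card_compl]
      simp only [Fintype.card_fin]
      rw [Nat.choose_symm (cardA A)]
  -- step 2: erase bijection on the first sum
  have step2 :
      (∑ A ∈ Finset.univ.filter
          (fun A : Finset (Fin (2*n+1)) => v ∈ A ∧ n + 1 ≤ A.card), f A.card)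
      = ∑ B ∈ Finset.univ.filter
          (fun B : Finset (Fin (2*n+1)) => B ⊆ Finset.univ.erase v ∧ n ≤ B.card),
        f (B.card + 1) := by
    refine Finset.sum_nbij' (fun A => A.erase v) (fun B => insert v B) ?_ ?_ ?_ ?_ ?_
    · intro A hA
      simp only [Finset.mem_filter, Finset.mem_univ, true_and] at hA ⊢
      refine ⟨Finset.erase_subset_erase v (Finset.subset_univ A), ?_⟩
      rw [Finset.card_erase_of_mem hA.1]
      omega
    · intro B hB
      simp only [Finset.mem_filter, Finset.mem_univ, true_and] at hB ⊢
      have hvB : v ∉ B := fun h => (Finset.mem_erase.mp (hB.1 h)).1 rfl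
      refine ⟨Finset.mem_insert_self v B, ?_⟩
      rw [Finset.card_insert_of_notMem hvB]
      omega
    · intro A hA
      simp only [Finset.mem_filter, Finset.mem_univ, true_and] at hA
      exact Finset.insert_erase hA.1
    · intro B hB
      simp only [Finset.mem_filter, Finset.mem_univ, true_and] at hB
      have hvB : v ∉ B := fun h => (Finset.mem_erase.mp (hB.1 h)).1 rfl
      exact Finset.erase_insert hvB
    · intro A hA
      simp only [Finset.mem_filter, Finset.mem_univ, true_and] at hA
      rw [Finset.card_erase_of_mem hA.1]
      have h1 : 1 ≤ A.card := by omega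
      have : A.card - 1 + 1 = A.card := by omega
      rw [this]
  -- step 3: group by cardinality
  have hcard : (Finset.univ.erase v : Finset (Fin (2*n+1))).card = 2*n := by
    rw [Finset.card_erase_of_mem (Finset.mem_univ v)]
    simp
  have step3 :
      (∑ B ∈ Finset.univ.filter
          (fun B : Finset (Fin (2*n+1)) => B ⊆ Finset.univ.erase v ∧ n ≤ B.card),
        f (B.card + 1))
      = ∑ j ∈ Finset.range (2*n+1),
          if n ≤ j then ((2*n).choose j : ℝ) * f (j+1) else 0 := by
    have h := groupLemma (Finset.univ.erase v : Finset (Fin (2*n+1)))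
      (fun k => n ≤ k) (fun k => f (k+1))
    rw [hcard] at h
    exact h
  -- step 4: simplify each term
  have step4 : ∀ j ∈ Finset.range (2*n+1),
      (if n ≤ j then ((2*n).choose j : ℝ) * f (j+1) else 0)
      = (if n ≤ j then ((j:ℝ)+1) else 0) / ((2*(n:ℝ)+1+1) * (2*(n:ℝ)+1)) := by
    intro j hj
    rw [Finset.mem_range] at hj
    split
    · have key : (2*n+1) * (2*n).choose j = (2*n+1).choose (j+1) * (j+1) :=
        Nat.add_one_mul_choose_eq (2*n) j
      have hb : (((2*n+1).choose (j+1)) : ℝ) ≠ 0 := by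
        have : 0 < (2*n+1).choose (j+1) := Nat.choose_pos (by omega)
        positivity
      have keyr : (2*(n:ℝ)+1) * (((2*n).choose j) : ℝ)
          = (((2*n+1).choose (j+1)) : ℝ) * ((j:ℝ)+1) := by
        exact_mod_cast congrArg (Nat.cast : ℕ → ℝ) key
      rw [hf]
      simp only
      push_cast
      field_simp
      nlinarith [keyr]
    · simp
  rw [Finset.sum_congr rfl step4] at step3
  rw [← Finset.sum_div, gaussLemma] at step3
  -- put everything together
  have expand : ssSuccessOdd n v =
      (∑ A ∈ Finset.univ.filter
          (fun A : Finset (Fin (2*n+1)) => v ∈ A ∧ n + 1 ≤ A.card), f A.card) +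
      (∑ A ∈ Finset.univ.filter
          (fun A : Finset (Fin (2*n+1)) => v ∉ A ∧ A.card ≤ n), f A.card) := by
    rw [ssSuccessOdd, hf]
    congr 1 <;> refine Finset.sum_congr rfl fun A _ => ?_ <;> simp only <;>
      rw [div_div]
  rw [expand, step1, step2, step3]
  have hNr : ((2*n+1 : ℕ):ℝ) = 2*(n:ℝ)+1 := by push_cast; ring
  rw [hNr]
  have h1 : (2*(n:ℝ)+1) ≠ 0 := by positivity
  field_simp
  ring
set_option maxHeartbeats 1600000 in
/-- In a simple majority voting system with an odd number `N = 2n+1` of voters,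
the total Shapley-Shubik rate of success of any voter equals `3/4 + 1/(4N)`,
and in particular it converges to `3/4` as `N → ∞`. -/

theorem shapley_shubik_success_odd :
    (∀ (n : ℕ) (v : Fin (2 * n + 1)),
      ssSuccessOdd n v = 3 / 4 + 1 / (4 * ((2 * n + 1 : ℕ) : ℝ))) ∧
    Filter.Tendsto (fun n : ℕ => ssSuccessOdd n ⟨0, by omega⟩)
      Filter.atTop (nhds (3 / 4)) := by
  refine ⟨mainFormula, ?_⟩
  have hfun : (fun n : ℕ => ssSuccessOdd n ⟨0, by omega⟩)
      = fun n : ℕ => 3 / 4 + 1 / (4 * ((2 * n + 1 : ℕ) : ℝ)) := by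
    funext n; exact mainFormula n _
  rw [hfun]
  have : Filter.Tendsto (fun n : ℕ => 1 / (4 * ((2 * n + 1 : ℕ) : ℝ)))
      Filter.atTop (nhds 0) := by
    simp only [one_div]
    apply Filter.Tendsto.inv_tendsto_atTop
    apply Filter.tendsto_atTop_mono (fun n : ℕ => ?_) tendsto_natCast_atTop_atTop
    push_cast
    nlinarith [Nat.cast_nonneg (α := ℝ) n]
  have h := (tendsto_const_nhds (x := (3/4 : ℝ)) (f := Filter.atTop (α := ℕ))).add this
  simpa using h
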